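/- arXiv:0911.3522 — 4 statements merged into one kernel-verified Lean document; each statement's English description precedes it below -/
import Mathlib

section
/- Let K be a field equipped with an absolute value |·| : K → ℝ, let X and Y be finite sets and f : X → Y a map. If a = (a_x) ∈ K^X satisfies ∑_{x∈X} |a_x|² ≤ 1, and b = (b_x) ∈ K^X satisfies ∑_{x∈f⁻¹(y)} |b_x|² ≤ 1 for every y ∈ Y, then the contraction (a,b) ∈ K^Y defined by (a,b)_y = ∑_{x∈f⁻¹(y)} a_x·b_x satisfies ∑_{y∈Y} |∑_{x∈f⁻¹(y)} a_x·b_x|² ≤ 1. -/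
open scoped Classical

/-- **Closure of the unit ℓ²-balls under contraction (Cauchy–Schwarz).**
Let `K` be a field with an absolute value `v : K → ℝ`, `X`, `Y` finite sets and
`f : X → Y` a map.  If `a ∈ K^X` lies in the unit ℓ²-ball, and for every `y ∈ Y`
the restriction of `b ∈ K^X` to the fiber `f⁻¹(y)` lies in the unit ℓ²-ball, then
the contraction `(a, b)_y = ∑_{x ∈ f⁻¹(y)} a_x * b_x` lies in the unit ℓ²-ball of `K^Y`. -/
theorem realPrime_contr_mem_unitBall (K : Type*) [Field K] (v : AbsoluteValue K ℝ)
    (X Y : Type*) [Fintype X] [Fintype Y] (f : X → Y)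
    (a : X → K) (ha : ∑ x : X, v (a x) ^ 2 ≤ 1)
    (b : X → K)
    (hb : ∀ y : Y, ∑ x ∈ Finset.univ.filter (fun x => f x = y), v (b x) ^ 2 ≤ 1) :
    ∑ y : Y, v (∑ x ∈ Finset.univ.filter (fun x => f x = y), a x * b x) ^ 2 ≤ 1 := by
  have key : ∀ y : Y, v (∑ x ∈ Finset.univ.filter (fun x => f x = y), a x * b x) ^ 2 ≤
      ∑ x ∈ Finset.univ.filter (fun x => f x = y), v (a x) ^ 2 := by
    intro y
    set s := Finset.univ.filter (fun x => f x = y)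
    calc v (∑ x ∈ s, a x * b x) ^ 2 ≤ (∑ x ∈ s, v (a x) * v (b x)) ^ 2 := by
          apply pow_le_pow_left₀ (AbsoluteValue.nonneg _ _)
          calc v (∑ x ∈ s, a x * b x) ≤ ∑ x ∈ s, v (a x * b x) := v.sum_le _ _
            _ = ∑ x ∈ s, v (a x) * v (b x) := by simp [v.map_mul]
      _ ≤ (∑ x ∈ s, v (a x) ^ 2) * (∑ x ∈ s, v (b x) ^ 2) :=
          Finset.sum_mul_sq_le_sq_mul_sq s _ _
      _ ≤ (∑ x ∈ s, v (a x) ^ 2) * 1 := by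
          apply mul_le_mul_of_nonneg_left (hb y)
          exact Finset.sum_nonneg fun x _ => sq_nonneg _
      _ = ∑ x ∈ s, v (a x) ^ 2 := mul_one _
  calc ∑ y : Y, v (∑ x ∈ Finset.univ.filter (fun x => f x = y), a x * b x) ^ 2
      ≤ ∑ y : Y, ∑ x ∈ Finset.univ.filter (fun x => f x = y), v (a x) ^ 2 :=
        Finset.sum_le_sum fun y _ => key y
    _ = ∑ x : X, v (a x) ^ 2 := Finset.sum_fiberwise _ _ _
    _ ≤ 1 := ha
end

section
/- Let K be a field equipped with an absolute value |·| : K → ℝ, let X and Y be finite sets and f : X → Y a map. Suppose a = (a_x) ∈ K^X satisfies ∑_{x∈X} |a_x|² ≤ 1 and b = (b_x) ∈ K^X satisfies ∑_{x∈f⁻¹(y)} |b_x|² ≤ 1 for every y ∈ Y. If moreover either ∑_{x∈X} |a_x|² < 1, or ∑_{x∈f⁻¹(y)} |b_x|² < 1 for every y ∈ Y, then the contraction satisfies the strict inequality ∑_{y∈Y} |∑_{x∈f⁻¹(y)} a_x·b_x|² < 1. -/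
open scoped Classical

lemma realPrime_aux_key (K : Type*) [Field K] (v : AbsoluteValue K ℝ)
    {ι : Type*} (s : Finset ι) (a b : ι → K) :
    v (∑ x ∈ s, a x * b x) ^ 2 ≤ (∑ x ∈ s, v (a x) ^ 2) * (∑ x ∈ s, v (b x) ^ 2) := by
  calc v (∑ x ∈ s, a x * b x) ^ 2
      ≤ (∑ x ∈ s, v (a x) * v (b x)) ^ 2 := by
        apply pow_le_pow_left₀ (v.nonneg _)
        refine le_trans (v.sum_le _ _) (le_of_eq ?_)
        exact Finset.sum_congr rfl fun x _ => v.map_mul _ _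
    _ ≤ (∑ x ∈ s, v (a x) ^ 2) * (∑ x ∈ s, v (b x) ^ 2) :=
        Finset.sum_mul_sq_le_sq_mul_sq s _ _

/-- **The ideal property of the maximal ideal `m` at a real prime: `(O,m) ⊆ m` and `(m,O) ⊆ m`.**
Let `K` be a field with an absolute value `v : K → ℝ`, `X`, `Y` finite sets and
`f : X → Y` a map.  Suppose `a ∈ K^X` lies in the unit ℓ²-ball, and for every `y ∈ Y` the
restriction of `b ∈ K^X` to the fiber `f⁻¹(y)` lies in the unit ℓ²-ball.  If moreover either
`a` lies in the open unit ℓ²-ball, or every fiberwise restriction of `b` lies in the open unit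
ℓ²-ball, then the contraction `(a, b)_y = ∑_{x ∈ f⁻¹(y)} a_x * b_x` lies in the open unit
ℓ²-ball of `K^Y`. -/
theorem realPrime_contr_mem_maximalIdeal (K : Type*) [Field K] (v : AbsoluteValue K ℝ)
    (X Y : Type*) [Fintype X] [Fintype Y] (f : X → Y)
    (a : X → K) (ha : ∑ x : X, v (a x) ^ 2 ≤ 1)
    (b : X → K)
    (hb : ∀ y : Y, ∑ x ∈ Finset.univ.filter (fun x => f x = y), v (b x) ^ 2 ≤ 1)
    (hstrict : (∑ x : X, v (a x) ^ 2 < 1) ∨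
      (∀ y : Y, ∑ x ∈ Finset.univ.filter (fun x => f x = y), v (b x) ^ 2 < 1)) :
    ∑ y : Y, v (∑ x ∈ Finset.univ.filter (fun x => f x = y), a x * b x) ^ 2 < 1 := by
  set A : Y → ℝ := fun y => ∑ x ∈ Finset.univ.filter (fun x => f x = y), v (a x) ^ 2 with hA
  set B : Y → ℝ := fun y => ∑ x ∈ Finset.univ.filter (fun x => f x = y), v (b x) ^ 2 with hB
  have hAnn : ∀ y, 0 ≤ A y := fun y =>
    Finset.sum_nonneg fun x _ => sq_nonneg _
  have hBnn : ∀ y, 0 ≤ B y := fun y =>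
    Finset.sum_nonneg fun x _ => sq_nonneg _
  have hAsum : ∑ y : Y, A y = ∑ x : X, v (a x) ^ 2 :=
    Finset.sum_fiberwise _ _ _
  have hkey : ∀ y : Y, v (∑ x ∈ Finset.univ.filter (fun x => f x = y), a x * b x) ^ 2
      ≤ A y * B y := fun y => realPrime_aux_key K v _ a b
  rcases hstrict with h | h
  · calc ∑ y : Y, v (∑ x ∈ Finset.univ.filter (fun x => f x = y), a x * b x) ^ 2
        ≤ ∑ y : Y, A y * B y := Finset.sum_le_sum fun y _ => hkey y
      _ ≤ ∑ y : Y, A y * 1 := Finset.sum_le_sum fun y _ =>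
          mul_le_mul_of_nonneg_left (hb y) (hAnn y)
      _ = ∑ y : Y, A y := by simp
      _ < 1 := hAsum ▸ h
  · rcases isEmpty_or_nonempty Y with hY | hY
    · simpa using one_pos
    · obtain ⟨y₀, _, hy₀⟩ := Finset.exists_max_image (Finset.univ : Finset Y) B
        ⟨Classical.arbitrary Y, Finset.mem_univ _⟩
      calc ∑ y : Y, v (∑ x ∈ Finset.univ.filter (fun x => f x = y), a x * b x) ^ 2
          ≤ ∑ y : Y, A y * B y := Finset.sum_le_sum fun y _ => hkey y
        _ ≤ ∑ y : Y, A y * B y₀ := Finset.sum_le_sum fun y _ =>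
            mul_le_mul_of_nonneg_left (hy₀ y (Finset.mem_univ y)) (hAnn y)
        _ = (∑ y : Y, A y) * B y₀ := by rw [Finset.sum_mul]
        _ ≤ 1 * B y₀ := by
            apply mul_le_mul_of_nonneg_right _ (hBnn y₀)
            rw [hAsum]; exact ha
        _ = B y₀ := one_mul _
        _ < 1 := h y₀
end

section
/- Every generalized ring A in which 1 ≠ 0 in A_{[1]} possesses a maximal proper h-ideal, i.e. a proper h-ideal not strictly contained in any other proper h-ideal. -/
open scoped Classical

noncomputable section

/-! ### Partially defined maps of finite sets -/

/-- Composition of partially defined maps of sets (`Set_•`). -/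
def pcomp {X Y Z : Type} (g : Y → Option Z) (f : X → Option Y) : X → Option Z :=
  fun x => (f x).bind g

/-- The fiber of a partially defined map over a point of the target. -/
abbrev pfib {X Y : Type} (f : X → Option Y) (y : Y) : Type := {x : X // f x = some y}

/-- The fiber of the identity partial map over `x` is a singleton. -/
def idFiberEquiv {X : Type} (x : X) : Fin 1 ≃ pfib (fun x' : X => some x') x where
  toFun _ := ⟨x, rfl⟩
  invFun _ := 0
  left_inv _ := Subsingleton.elim _ _
  right_inv p := Subtype.ext (Option.some.inj p.2).symm

/-- The fiber of the constant (total) map to the point `[1]` is everything. -/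
def constFiberEquiv (X : Type) (z : Fin 1) :
    X ≃ pfib (fun _ : X => some (0 : Fin 1)) z where
  toFun x := ⟨x, congrArg some (Subsingleton.elim (0 : Fin 1) z)⟩
  invFun p := p.1
  left_inv _ := rfl
  right_inv p := rfl

/-- The fiber of (the graph of) a bijection is a singleton. -/
def equivFiberEquiv {X Y : Type} (e : X ≃ Y) (y : Y) :
    Fin 1 ≃ pfib (fun x : X => some (e x)) y where
  toFun _ := ⟨e.symm y, congrArg some (e.apply_symm_apply y)⟩
  invFun _ := 0
  left_inv _ := Subsingleton.elim _ _
  right_inv p := Subtype.ext ((Equiv.symm_apply_eq e).mpr (Option.some.inj p.2).symm)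

/-- The fiber of the map `[1] → X` with image `{x}` over `x' = x` is a singleton. -/
def pointFiberEquiv {X : Type} {x x' : X} (h : x = x') :
    Fin 1 ≃ pfib (fun _ : Fin 1 => some x) x' where
  toFun z := ⟨z, congrArg some h⟩
  invFun p := p.1
  left_inv _ := rfl
  right_inv p := rfl

/-- Restriction of `f` to the fiber of `pcomp g f` over `z`, as a partial map into
the fiber of `g` over `z`. -/
def resMap {X Y Z : Type} (g : Y → Option Z) (f : X → Option Y) (z : Z) :
    pfib (pcomp g f) z → Option (pfib g z) :=
  fun x => (f x.1).bind fun y => if h : g y = some z then some ⟨y, h⟩ else none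

/-- Identification of the fibers of the restriction `resMap g f z` with fibers of `f`. -/
def resFiberEquiv {X Y Z : Type} (g : Y → Option Z) (f : X → Option Y) (z : Z)
    (p : pfib g z) : pfib f p.1 ≃ pfib (resMap g f z) p where
  toFun x := ⟨⟨x.1, by show (f x.1).bind g = some z; rw [x.2, Option.bind_some, p.2]⟩, by
    show (f x.1).bind _ = some p
    rw [x.2, Option.bind_some, dif_pos p.2]⟩
  invFun q := ⟨q.1.1, by
    have h := q.2
    unfold resMap at h
    rcases hf : f q.1.1 with _ | y
    · rw [hf, Option.bind_none] at h
      cases h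
    · rw [hf, Option.bind_some] at h
      by_cases hg : g y = some z
      · rw [dif_pos hg] at h
        have hy : y = p.1 := congrArg Subtype.val (Option.some.inj h)
        exact congrArg some hy
      · rw [dif_neg hg] at h
        cases h⟩
  left_inv x := Subtype.ext rfl
  right_inv q := Subtype.ext (Subtype.ext rfl)

/-! ### Fibered products -/

/-- The fibered product of two partial maps `g : Z ⇀ Y` and `f : X ⇀ Y`. -/
abbrev FP {X Y Z : Type} (g : Z → Option Y) (f : X → Option Y) : Type :=
  {p : Z × X // ∃ y : Y, g p.1 = some y ∧ f p.2 = some y}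

/-- First projection of the fibered product, as a partial map. -/
def fpFst {X Y Z : Type} (g : Z → Option Y) (f : X → Option Y) : FP g f → Option Z :=
  fun p => some p.1.1

/-- Second projection of the fibered product, as a partial map. -/
def fpSnd {X Y Z : Type} (g : Z → Option Y) (f : X → Option Y) : FP g f → Option X :=
  fun p => some p.1.2

/-- Identification of the fiber of the second projection of `Z ×_Y X` over `x`
with the fiber of `g` over `f x`. -/
def fpFiberSnd {X Y Z : Type} (g : Z → Option Y) (f : X → Option Y) {x : X} {y : Y}
    (hy : f x = some y) : pfib g y ≃ pfib (fpSnd g f) x where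
  toFun w := ⟨⟨(w.1, x), ⟨y, w.2, hy⟩⟩, rfl⟩
  invFun q := ⟨q.1.1.1, by
    obtain ⟨y', hg, hf⟩ := q.1.2
    have hx : q.1.1.2 = x := Option.some.inj q.2
    rw [hx] at hf
    have hyy : y' = y := Option.some.inj (hf.symm.trans hy)
    rw [hyy] at hg
    exact hg⟩
  left_inv w := Subtype.ext rfl
  right_inv q := by
    apply Subtype.ext
    apply Subtype.ext
    have hx : q.1.1.2 = x := Option.some.inj q.2
    exact Prod.ext rfl hx.symm

/-- Identification of the fiber of the first projection of `Z ×_Y X` over `z`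
with the fiber of `f` over `g z`. -/
def fpFiberFst {X Y Z : Type} (g : Z → Option Y) (f : X → Option Y) {z : Z} {y : Y}
    (hy : g z = some y) : pfib f y ≃ pfib (fpFst g f) z where
  toFun w := ⟨⟨(z, w.1), ⟨y, hy, w.2⟩⟩, rfl⟩
  invFun q := ⟨q.1.1.2, by
    obtain ⟨y', hg, hf⟩ := q.1.2
    have hz : q.1.1.1 = z := Option.some.inj q.2
    rw [hz] at hg
    have hyy : y' = y := Option.some.inj (hg.symm.trans hy)
    rw [hyy] at hf
    exact hf⟩
  left_inv w := Subtype.ext rfl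
  right_inv q := by
    apply Subtype.ext
    apply Subtype.ext
    have hz : q.1.1.1 = z := Option.some.inj q.2
    exact Prod.ext hz.symm rfl
/-! ### Generalized rings

A generalized ring assigns to each finite set `X` a pointed set `A X`, functorially
with respect to bijections (and hence, via the operations and units, with respect to
all partial bijections of finite sets), together with operations of multiplication
`∘ : A Y × A f → A X` and contraction `( , ) : A X × A f → A Y` for every partially
defined map `f : X ⇀ Y`, where `A f = ∏_{y ∈ Y} A (f⁻¹ y)`, and a unit `1 ∈ A [1]`,
subject to the axioms of associativity, left- and right-adjunction, left- and
right-linearity, and the unit axioms. -/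

/-- The data underlying a generalized ring. -/
structure GenRingData where
  /-- the pointed set attached to a finite set `X` -/
  A : (X : Type) → [inst : Finite X] → Type
  /-- the base point `0_X ∈ A_X` -/
  zero : (X : Type) → [inst : Finite X] → A X
  /-- the unit `1 ∈ A_{[1]}` -/
  one : A (Fin 1)
  /-- functoriality with respect to bijections of finite sets -/
  map : {X Y : Type} → [inst : Finite X] → [inst' : Finite Y] → (X ≃ Y) → A X → A Y
  /-- multiplication `∘ : A_Y × A_f → A_X` for a partially defined map `f : X ⇀ Y` -/
  mul : {X Y : Type} → [inst : Finite X] → [inst' : Finite Y] → (f : X → Option Y) →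
      A Y → ((y : Y) → A (pfib f y)) → A X
  /-- contraction `( , ) : A_X × A_f → A_Y` for a partially defined map `f : X ⇀ Y` -/
  contr : {X Y : Type} → [inst : Finite X] → [inst' : Finite Y] → (f : X → Option Y) →
      A X → ((y : Y) → A (pfib f y)) → A Y

namespace GenRingData

variable (R : GenRingData)

/-- The unit family `1_{id_X} ∈ A_{id_X}`. -/
def oneId (X : Type) [Finite X] : (x : X) → R.A (pfib (fun x' : X => some x') x) :=
  fun x => R.map (idFiberEquiv x) R.one

/-- The monoid operation `a ∘ b` on `A_{[1]}`. -/
def op (a b : R.A (Fin 1)) : R.A (Fin 1) :=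
  R.mul (fun z : Fin 1 => some z) a (fun z => R.map (idFiberEquiv z) b)

/-- The `n`-fold power `a ∘ ⋯ ∘ a` in the monoid `A_{[1]}` (with `a⁰ = 1`). -/
def opPow (a : R.A (Fin 1)) : ℕ → R.A (Fin 1)
  | 0 => R.one
  | n + 1 => R.op a (opPow a n)

/-- The left action `s ∘ a` of `A_{[1]}` on `A_X` (operation (1.2.5)). -/
def lact {X : Type} [Finite X] (s : R.A (Fin 1)) (a : R.A X) : R.A X :=
  R.mul (fun _ : X => some (0 : Fin 1)) s (fun z => R.map (constFiberEquiv X z) a)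

/-- The pairing `(a, d) : A_X × A_X → A_{[1]}` (operation (1.2.6)). -/
def pair {X : Type} [Finite X] (a d : R.A X) : R.A (Fin 1) :=
  R.contr (fun _ : X => some (0 : Fin 1)) a (fun z => R.map (constFiberEquiv X z) d)

/-- The right (diagonal) action `b ∘ c` of `(A_{[1]})^X` on `A_X` (operation (1.2.7)). -/
def ract {X : Type} [Finite X] (b : R.A X) (c : X → R.A (Fin 1)) : R.A X :=
  R.mul (fun x : X => some x) b (fun x => R.map (idFiberEquiv x) (c x))

/-- The involution `a ↦ aᵗ = (1, a)` of `A_{[1]}`. -/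
def adj (a : R.A (Fin 1)) : R.A (Fin 1) := R.pair R.one a

/-- The element `(a, 1_{j_x}) ∈ A_X` obtained from `a ∈ A_{[1]}` via the
inclusion `j_x : {x} ↪ X`; for `a = 1` this is the image `1_x` of the unit. -/
def pointElt (X : Type) [Finite X] (x : X) (a : R.A (Fin 1)) : R.A X :=
  R.contr (fun _ : Fin 1 => some x) a
    (fun x' => if h : x = x' then R.map (pointFiberEquiv h) R.one else R.zero _)

/-- The extended multiplication `A_g × A_f → A_{g∘f}`, defined fiberwise. -/
def emul {X Y Z : Type} [Finite X] [Finite Y] [Finite Z]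
    (g : Y → Option Z) (f : X → Option Y)
    (c : (z : Z) → R.A (pfib g z)) (b : (y : Y) → R.A (pfib f y)) :
    (z : Z) → R.A (pfib (pcomp g f) z) :=
  fun z => R.mul (resMap g f z) (c z) (fun p => R.map (resFiberEquiv g f z p) (b p.1))

/-- The extended contraction `A_{g∘f} × A_f → A_g`, defined fiberwise. -/
def econtr {X Y Z : Type} [Finite X] [Finite Y] [Finite Z]
    (g : Y → Option Z) (f : X → Option Y)
    (a : (z : Z) → R.A (pfib (pcomp g f) z)) (b : (y : Y) → R.A (pfib f y)) :
    (z : Z) → R.A (pfib g z) :=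
  fun z => R.contr (resMap g f z) (a z) (fun p => R.map (resFiberEquiv g f z p) (b p.1))

/-- The pullback `ã ∈ A_{g̃}` of `a ∈ A_g` along the fibered product (used in
the right-linearity axiom). -/
def atilde {X Y Z : Type} [Finite X] [Finite Y] [Finite Z]
    (g : Z → Option Y) (f : X → Option Y) (a : (y : Y) → R.A (pfib g y)) :
    (x : X) → R.A (pfib (fpSnd g f) x) :=
  fun x =>
    match hfx : f x with
    | some y => R.map (fpFiberSnd g f hfx) (a y)
    | none => R.zero _

/-- The pullback `c̃ ∈ A_{f̃}` of `c ∈ A_f` along the fibered product (used in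
the right-linearity axiom). -/
def ctilde {X Y Z : Type} [Finite X] [Finite Y] [Finite Z]
    (g : Z → Option Y) (f : X → Option Y) (c : (y : Y) → R.A (pfib f y)) :
    (z : Z) → R.A (pfib (fpFst g f) z) :=
  fun z =>
    match hgz : g z with
    | some y => R.map (fpFiberFst g f hgz) (c y)
    | none => R.zero _

end GenRingData

/-- A generalized ring: the data of `GenRingData` subject to the axioms
(pointedness, functoriality, zero laws, associativity, left/right adjunction,
left/right linearity, and the unit axioms, the latter in their reduced form over
the one-point base, which is equivalent to the general form). -/
structure GenRing where
  /-- the underlying data -/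
  data : GenRingData
  /-- `A_∅ = {0}` -/
  isEmpty_eq_zero : ∀ (X : Type) [Finite X] [IsEmpty X] (a : data.A X), a = data.zero X
  /-- functoriality: identity -/
  map_refl : ∀ (X : Type) [Finite X] (a : data.A X), data.map (Equiv.refl X) a = a
  /-- functoriality: composition -/
  map_trans : ∀ {X Y Z : Type} [Finite X] [Finite Y] [Finite Z] (e : X ≃ Y) (e' : Y ≃ Z)
      (a : data.A X), data.map (e.trans e') a = data.map e' (data.map e a)
  /-- functoriality: the maps are pointed -/
  map_zero : ∀ {X Y : Type} [Finite X] [Finite Y] (e : X ≃ Y),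
      data.map e (data.zero X) = data.zero Y
  /-- `0 ∘ b = 0` -/
  mul_zero_left : ∀ {X Y : Type} [Finite X] [Finite Y] (f : X → Option Y)
      (b : (y : Y) → data.A (pfib f y)), data.mul f (data.zero Y) b = data.zero X
  /-- `a ∘ 0_f = 0` -/
  mul_zero_right : ∀ {X Y : Type} [Finite X] [Finite Y] (f : X → Option Y) (a : data.A Y),
      data.mul f a (fun y => data.zero (pfib f y)) = data.zero X
  /-- `(0, b) = 0` -/
  contr_zero_left : ∀ {X Y : Type} [Finite X] [Finite Y] (f : X → Option Y)
      (b : (y : Y) → data.A (pfib f y)), data.contr f (data.zero X) b = data.zero Y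
  /-- `(a, 0_f) = 0` -/
  contr_zero_right : ∀ {X Y : Type} [Finite X] [Finite Y] (f : X → Option Y) (a : data.A X),
      data.contr f a (fun y => data.zero (pfib f y)) = data.zero Y
  /-- associativity: `d ∘ (c ∘ b) = (d ∘ c) ∘ b` -/
  assoc : ∀ {X Y Z : Type} [Finite X] [Finite Y] [Finite Z]
      (g : Y → Option Z) (f : X → Option Y) (d : data.A Z)
      (c : (z : Z) → data.A (pfib g z)) (b : (y : Y) → data.A (pfib f y)),
      data.mul (pcomp g f) d (data.emul g f c b) = data.mul f (data.mul g d c) b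
  /-- left-adjunction: `(d, a ∘ c) = ((d, c), a)` -/
  left_adj : ∀ {X Y Z : Type} [Finite X] [Finite Y] [Finite Z]
      (g : Y → Option Z) (f : X → Option Y) (d : data.A X)
      (a : (z : Z) → data.A (pfib g z)) (c : (y : Y) → data.A (pfib f y)),
      data.contr (pcomp g f) d (data.emul g f a c) = data.contr g (data.contr f d c) a
  /-- right-adjunction: `(d ∘ c, a) = (d, (a, c))` -/
  right_adj : ∀ {X Y Z : Type} [Finite X] [Finite Y] [Finite Z]
      (g : Y → Option Z) (f : X → Option Y) (d : data.A Y)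
      (a : (z : Z) → data.A (pfib (pcomp g f) z)) (c : (y : Y) → data.A (pfib f y)),
      data.contr (pcomp g f) (data.mul f d c) a = data.contr g d (data.econtr g f a c)
  /-- left-linearity: `(d ∘ a, c) = d ∘ (a, c)` -/
  left_lin : ∀ {X Y Z : Type} [Finite X] [Finite Y] [Finite Z]
      (g : Y → Option Z) (f : X → Option Y) (d : data.A Z)
      (a : (z : Z) → data.A (pfib (pcomp g f) z)) (c : (y : Y) → data.A (pfib f y)),
      data.contr f (data.mul (pcomp g f) d a) c = data.mul g d (data.econtr g f a c)
  /-- right-linearity: `(d, c) ∘ a = (d ∘ ã, c̃)`, with `ã`, `c̃` the pullbacks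
  along the fibered product `Z ×_Y X` -/
  right_lin : ∀ {X Y Z : Type} [Finite X] [Finite Y] [Finite Z]
      (g : Z → Option Y) (f : X → Option Y) (d : data.A X)
      (a : (y : Y) → data.A (pfib g y)) (c : (y : Y) → data.A (pfib f y)),
      data.mul g (data.contr f d c) a
        = data.contr (fpFst g f) (data.mul (fpSnd g f) d (data.atilde g f a))
            (data.ctilde g f c)
  /-- unit axiom: `a ∘ 1_{id_X} = a` -/
  mul_one_id : ∀ (X : Type) [Finite X] (a : data.A X),
      data.mul (fun x : X => some x) a (data.oneId X) = a
  /-- unit axiom: `1 ∘ a = a` -/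
  one_lact : ∀ (X : Type) [Finite X] (a : data.A X), data.lact data.one a = a
  /-- unit axiom: `(a, 1_{id_X}) = a` -/
  contr_one_id : ∀ (X : Type) [Finite X] (a : data.A X),
      data.contr (fun x : X => some x) a (data.oneId X) = a
  /-- unit axiom (1.8.11): `(a, 1_f) = f_A(a)` for a bijection `f = e` -/
  map_eq_contr : ∀ {X Y : Type} [Finite X] [Finite Y] (e : X ≃ Y) (a : data.A X),
      data.contr (fun x : X => some (e x)) a
        (fun y => data.map (equivFiberEquiv e y) data.one) = data.map e a
  /-- unit axiom (1.8.11): `a ∘ 1_{fᵗ} = f_A(a)` for a bijection `f = e` -/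
  map_eq_mul : ∀ {X Y : Type} [Finite X] [Finite Y] (e : X ≃ Y) (a : data.A X),
      data.mul (fun y : Y => some (e.symm y)) a
        (fun x => data.map (equivFiberEquiv e.symm x) data.one) = data.map e a
namespace GenRing

variable (R : GenRing)

/-- An `h`-ideal of a generalized ring: a subset `I ⊆ A_{[1]}` such that
`(b ∘ c, d) ∈ I` for all finite `X`, all `b, d ∈ A_X` and all `c ∈ I^X ⊆ (A_{[1]})^X`. -/
def IsHIdeal (I : Set (R.data.A (Fin 1))) : Prop :=
  ∀ (X : Type) [Finite X], ∀ (b d : R.data.A X) (c : X → R.data.A (Fin 1)),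
    (∀ x, c x ∈ I) → R.data.pair (R.data.ract b c) d ∈ I

/-- A prime of a generalized ring: a proper `h`-ideal `P` whose complement is
closed under the multiplication of `A_{[1]}`. -/
def IsPrimeH (P : Set (R.data.A (Fin 1))) : Prop :=
  R.IsHIdeal P ∧ R.data.one ∉ P ∧
    ∀ a b : R.data.A (Fin 1), R.data.op a b ∈ P → a ∈ P ∨ b ∈ P

end GenRing

/-- The spectrum of a generalized ring: the set of its primes. -/
structure SpecG (R : GenRing) where
  /-- the underlying prime `h`-ideal -/
  I : Set (R.data.A (Fin 1))
  /-- it is prime -/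
  prime : R.IsPrimeH I

namespace GenRing

variable (R : GenRing)

/-- The basic open set `D_a = {𝔭 : a ∉ 𝔭}` of the Zariski topology. -/
def basicOpen (a : R.data.A (Fin 1)) : Set (SpecG R) := {p | a ∉ p.I}

/-- The closed set `V(s) = {𝔭 : 𝔭 ⊇ s}` of the Zariski topology. -/
def zeroLocus (s : Set (R.data.A (Fin 1))) : Set (SpecG R) := {p | s ⊆ p.I}

/-- The Zariski topology on the spectrum, generated by the basic open sets. -/
instance : TopologicalSpace (SpecG R) :=
  TopologicalSpace.generateFrom {U | ∃ a : R.data.A (Fin 1), U = R.basicOpen a}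

end GenRing

/-- A homomorphism of generalized rings: a (pointed, natural) family of maps
preserving multiplication, contraction and the unit. -/
structure GenRingHom (R S : GenRing) where
  /-- the underlying family of maps -/
  app : (X : Type) → [inst : Finite X] → R.data.A X → S.data.A X
  /-- zero is preserved -/
  app_zero : ∀ (X : Type) [Finite X], app X (R.data.zero X) = S.data.zero X
  /-- the unit is preserved -/
  app_one : app (Fin 1) R.data.one = S.data.one
  /-- naturality with respect to bijections -/
  app_map : ∀ {X Y : Type} [Finite X] [Finite Y] (e : X ≃ Y) (a : R.data.A X),
      app Y (R.data.map e a) = S.data.map e (app X a)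
  /-- multiplication is preserved -/
  app_mul : ∀ {X Y : Type} [Finite X] [Finite Y] (f : X → Option Y)
      (a : R.data.A Y) (b : (y : Y) → R.data.A (pfib f y)),
      app X (R.data.mul f a b) = S.data.mul f (app Y a) (fun y => app (pfib f y) (b y))
  /-- contraction is preserved -/
  app_contr : ∀ {X Y : Type} [Finite X] [Finite Y] (f : X → Option Y)
      (a : R.data.A X) (b : (y : Y) → R.data.A (pfib f y)),
      app Y (R.data.contr f a b) = S.data.contr f (app X a) (fun y => app (pfib f y) (b y))

namespace GenRingHom

variable {R S : GenRing} (φ : GenRingHom R S)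

theorem app_op (a b : R.data.A (Fin 1)) :
    φ.app (Fin 1) (R.data.op a b) = S.data.op (φ.app (Fin 1) a) (φ.app (Fin 1) b) := by
  unfold GenRingData.op
  rw [φ.app_mul]
  congr 1
  funext z
  rw [φ.app_map]

theorem app_ract {X : Type} [Finite X] (b : R.data.A X) (c : X → R.data.A (Fin 1)) :
    φ.app X (R.data.ract b c) = S.data.ract (φ.app X b) (fun x => φ.app (Fin 1) (c x)) := by
  unfold GenRingData.ract
  rw [φ.app_mul]
  congr 1
  funext x
  rw [φ.app_map]

theorem app_pair {X : Type} [Finite X] (a d : R.data.A X) :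
    φ.app (Fin 1) (R.data.pair a d) = S.data.pair (φ.app X a) (φ.app X d) := by
  unfold GenRingData.pair
  rw [φ.app_contr]
  congr 1
  funext z
  rw [φ.app_map]

theorem app_lact {X : Type} [Finite X] (s : R.data.A (Fin 1)) (a : R.data.A X) :
    φ.app X (R.data.lact s a) = S.data.lact (φ.app (Fin 1) s) (φ.app X a) := by
  unfold GenRingData.lact
  rw [φ.app_mul]
  congr 1
  funext z
  rw [φ.app_map]

/-- The map `spec(φ) : spec(S) → spec(R)`, `𝔮 ↦ φ_{[1]}⁻¹(𝔮)`, induced by a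
homomorphism of generalized rings `φ : R → S`. -/
def specMap (q : SpecG S) : SpecG R where
  I := φ.app (Fin 1) ⁻¹' q.I
  prime := by
    refine ⟨?_, ?_, ?_⟩
    · intro X _ b d c hc
      show φ.app (Fin 1) (R.data.pair (R.data.ract b c) d) ∈ q.I
      rw [φ.app_pair, φ.app_ract]
      exact q.prime.1 X (φ.app X b) (φ.app X d) (fun x => φ.app (Fin 1) (c x)) hc
    · show φ.app (Fin 1) R.data.one ∉ q.I
      rw [φ.app_one]
      exact q.prime.2.1
    · intro a b hab
      have h : S.data.op (φ.app (Fin 1) a) (φ.app (Fin 1) b) ∈ q.I := by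
        rw [← φ.app_op]; exact hab
      exact q.prime.2.2 _ _ h

end GenRingHom

/-- An equivalence ideal of a generalized ring: a family of equivalence relations
on the sets `A_X` respecting the operations of multiplication and contraction. -/
structure EqvIdeal (R : GenRing) where
  /-- the family of relations -/
  rel : (X : Type) → [inst : Finite X] → R.data.A X → R.data.A X → Prop
  refl : ∀ (X : Type) [Finite X] (a : R.data.A X), rel X a a
  symm : ∀ (X : Type) [Finite X] {a b : R.data.A X}, rel X a b → rel X b a
  trans : ∀ (X : Type) [Finite X] {a b c : R.data.A X}, rel X a b → rel X b c → rel X a c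
  /-- `a ∼ a'` implies `a ∘ b ∼ a' ∘ b` -/
  mul_left : ∀ {X Y : Type} [Finite X] [Finite Y] (f : X → Option Y) {a a' : R.data.A Y}
      (b : (y : Y) → R.data.A (pfib f y)),
      rel Y a a' → rel X (R.data.mul f a b) (R.data.mul f a' b)
  /-- `b ∼ b'` (componentwise) implies `a ∘ b ∼ a ∘ b'` -/
  mul_right : ∀ {X Y : Type} [Finite X] [Finite Y] (f : X → Option Y) (a : R.data.A Y)
      {b b' : (y : Y) → R.data.A (pfib f y)},
      (∀ y, rel (pfib f y) (b y) (b' y)) → rel X (R.data.mul f a b) (R.data.mul f a b')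
  /-- `a ∼ a'` implies `(a, b) ∼ (a', b)` -/
  contr_left : ∀ {X Y : Type} [Finite X] [Finite Y] (f : X → Option Y) {a a' : R.data.A X}
      (b : (y : Y) → R.data.A (pfib f y)),
      rel X a a' → rel Y (R.data.contr f a b) (R.data.contr f a' b)
  /-- `b ∼ b'` (componentwise) implies `(a, b) ∼ (a, b')` -/
  contr_right : ∀ {X Y : Type} [Finite X] [Finite Y] (f : X → Option Y) (a : R.data.A X)
      {b b' : (y : Y) → R.data.A (pfib f y)},
      (∀ y, rel (pfib f y) (b y) (b' y)) → rel Y (R.data.contr f a b) (R.data.contr f a b')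

namespace GenRing

variable (R : GenRing)

/-- The equivalence ideal `E(I)` generated by an (`h`-)ideal `I`: `a ∼ b` iff the
pair `(a, b)` belongs to every equivalence ideal containing `(i, 0)` for all `i ∈ I`. -/
def erel (I : Set (R.data.A (Fin 1))) (X : Type) [Finite X] (a b : R.data.A X) : Prop :=
  ∀ ε : EqvIdeal R, (∀ i ∈ I, ε.rel (Fin 1) i (R.data.zero (Fin 1))) → ε.rel X a b

/-- A stable `h`-ideal: an `h`-ideal `I` such that for every pair `(a, b)` in the
equivalence ideal `E(I)` generated by `I` one has `a ∈ I ↔ b ∈ I`. -/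
def IsStableHIdeal (I : Set (R.data.A (Fin 1))) : Prop :=
  R.IsHIdeal I ∧ ∀ a b : R.data.A (Fin 1), R.erel I (Fin 1) a b → (a ∈ I ↔ b ∈ I)

/-- A multiplicative subset of `A_{[1]}`: contains `1`, closed under `∘`,
and stable under the involution. -/
def IsMulSet (S : Set (R.data.A (Fin 1))) : Prop :=
  R.data.one ∈ S ∧ (∀ a ∈ S, ∀ b ∈ S, R.data.op a b ∈ S) ∧
    (∀ a, a ∈ S ↔ R.data.adj a ∈ S)

/-- `φ : R → L` presents `L` as the localization `S⁻¹R` of `R` at the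
multiplicative subset `S ⊆ A_{[1]}`: every element of `S` becomes invertible, every
element of `L` is a fraction `φ(a)/φ(s)`, and `φ(a) = φ(b)` iff `s ∘ a = s ∘ b`
for some `s ∈ S`. -/
def IsLocalizationAt (S : Set (R.data.A (Fin 1))) {L : GenRing} (φ : GenRingHom R L) : Prop :=
  (∀ s ∈ S, ∃ t : L.data.A (Fin 1),
      L.data.op t (φ.app (Fin 1) s) = L.data.one ∧
      L.data.op (φ.app (Fin 1) s) t = L.data.one) ∧
  (∀ (X : Type) [Finite X], ∀ l : L.data.A X, ∃ (a : R.data.A X) (s : R.data.A (Fin 1)),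
      s ∈ S ∧ L.data.lact (φ.app (Fin 1) s) l = φ.app X a) ∧
  (∀ (X : Type) [Finite X], ∀ a b : R.data.A X,
      φ.app X a = φ.app X b ↔ ∃ s ∈ S, R.data.lact s a = R.data.lact s b)

end GenRing

/-- **Existence of maximal proper `h`-ideals.**  Every generalized ring `R` in which
`1 ≠ 0` in `A_{[1]}` possesses a maximal proper `h`-ideal, i.e. a proper `h`-ideal
not strictly contained in any other proper `h`-ideal. -/
theorem exists_maximal_proper_hIdeal (R : GenRing)
    (h : R.data.one ≠ R.data.zero (Fin 1)) :
    ∃ m : Set (R.data.A (Fin 1)), R.IsHIdeal m ∧ R.data.one ∉ m ∧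
      ∀ b : Set (R.data.A (Fin 1)), R.IsHIdeal b → R.data.one ∉ b → m ⊆ b → b = m := by
  classical
  -- every h-ideal contains zero
  have hzero : ∀ I : Set (R.data.A (Fin 1)), R.IsHIdeal I → R.data.zero (Fin 1) ∈ I := by
    intro I hI
    have hmem := hI Empty (R.data.zero Empty) (R.data.zero Empty)
      (fun x => isEmptyElim x) (fun x => isEmptyElim x)
    have he : R.data.ract (R.data.zero Empty) (fun x : Empty => isEmptyElim x)
        = R.data.zero Empty := R.isEmpty_eq_zero Empty _
    have hp : R.data.pair (R.data.ract (R.data.zero Empty) (fun x : Empty => isEmptyElim x))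
        (R.data.zero Empty) = R.data.zero (Fin 1) := by
      rw [he]
      unfold GenRingData.pair
      exact R.contr_zero_left _ _
    rwa [hp] at hmem
  -- the singleton {0} is a proper h-ideal
  have h0ideal : R.IsHIdeal {R.data.zero (Fin 1)} := by
    intro X _ b d c hc
    have hr : R.data.ract b c = R.data.zero X := by
      unfold GenRingData.ract
      have hfun : (fun x => R.data.map (idFiberEquiv x) (c x))
          = fun x => R.data.zero (pfib (fun x' : X => some x') x) := by
        funext x
        rw [show c x = R.data.zero (Fin 1) from hc x, R.map_zero]
      rw [hfun]
      exact R.mul_zero_right _ _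
    have hp : R.data.pair (R.data.ract b c) d = R.data.zero (Fin 1) := by
      rw [hr]
      unfold GenRingData.pair
      exact R.contr_zero_left _ _
    exact hp
  set S : Set (Set (R.data.A (Fin 1))) :=
    {I | R.IsHIdeal I ∧ R.data.one ∉ I} with hS
  have h0S : ({R.data.zero (Fin 1)} : Set _) ∈ S := by
    refine ⟨h0ideal, ?_⟩
    intro h1
    exact h (h1 : R.data.one = R.data.zero (Fin 1))
  have hchains : ∀ c ⊆ S, IsChain (· ⊆ ·) c → c.Nonempty →
      ∃ ub ∈ S, ∀ s ∈ c, s ⊆ ub := by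
    intro c hcS hchain hcne
    refine ⟨⋃₀ c, ⟨?_, ?_⟩, fun s hs => Set.subset_sUnion_of_mem hs⟩
    · -- the union of a nonempty chain of h-ideals is an h-ideal
      intro X _ b d cf hcf
      by_cases hX : Nonempty X
      · -- choose for each x a member of the chain containing cf x
        choose F hFc hFm using hcf
        haveI : Fintype X := Fintype.ofFinite X
        obtain ⟨IM, hIM, hIMmax⟩ := Set.Finite.exists_maximalFor id (Set.range F)
          (Set.finite_range F) (Set.range_nonempty F)
        obtain ⟨x0, hx0⟩ := hIM
        have hIMc : IM ∈ c := by rw [← hx0]; exact hFc x0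
        have hall : ∀ x, cf x ∈ IM := by
          intro x
          rcases eq_or_ne (F x) IM with he | hne
          · rw [← he]; exact hFm x
          · rcases hchain (hFc x) hIMc hne with hle | hle
            · exact hle (hFm x)
            · have : IM = F x := hle.antisymm (hIMmax ⟨x, rfl⟩ hle)
              rw [show IM = F x from this]; exact hFm x
        have := (hcS hIMc).1 X b d cf hall
        exact Set.mem_sUnion.2 ⟨IM, hIMc, this⟩
      · -- X empty: the pairing is zero, which lies in every h-ideal
        haveI : IsEmpty X := not_nonempty_iff.mp hX
        obtain ⟨I0, hI0⟩ := hcne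
        have hr : R.data.ract b cf = R.data.zero X := R.isEmpty_eq_zero X _
        have hp : R.data.pair (R.data.ract b cf) d = R.data.zero (Fin 1) := by
          rw [hr]
          unfold GenRingData.pair
          exact R.contr_zero_left _ _
        rw [hp]
        exact Set.mem_sUnion.2 ⟨I0, hI0, hzero I0 (hcS hI0).1⟩
    · -- the union is proper
      intro h1
      obtain ⟨I0, hI0c, h1I0⟩ := Set.mem_sUnion.1 h1
      exact (hcS hI0c).2 h1I0
  obtain ⟨m, -, hmS, hmax⟩ := zorn_subset_nonempty S hchains _ h0S
  refine ⟨m, hmS.1, hmS.2, ?_⟩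
  intro b hb h1b hmb
  exact (hmax ⟨hb, h1b⟩ hmb).antisymm hmb

end
end

section
/- The sequence of abelian groups 1 → {±1} → ℚˣ → (⊕_p ℤ) ⊕ ℝ → ℝ_{>0}ˣ → 1 is exact, where the direct sum is over all prime numbers p, the map div : ℚˣ → (⊕_p ℤ) ⊕ ℝ sends f to ((ν_p(f))_p, −log|f|) with ν_p the p-adic valuation and |·| the usual archimedean absolute value, and the map (⊕_p ℤ) ⊕ ℝ → ℝ_{>0}ˣ sends ((n_p)_p, t) to e^t · ∏_p p^{n_p}. That is: div is a group homomorphism with kernel {±1}; the second map is a surjective group homomorphism; and its kernel equals the image of div. -/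
noncomputable section

/-- The map `(⊕_p ℤ) ⊕ ℝ → ℝ`, `((n_p)_p, t) ↦ e^t · ∏_p p^(n_p)`. -/
def expProdMap (x : (Nat.Primes →₀ ℤ) × ℝ) : ℝ :=
  Real.exp x.2 * ∏ p ∈ x.1.support, ((p : ℕ) : ℝ) ^ (x.1 p)

/-- factorization of a natural number, as a finsupp on primes with values in `ℤ`. -/
private def Fz (n : ℕ) : Nat.Primes →₀ ℤ :=
  Finsupp.comapDomain (fun p : Nat.Primes => (p : ℕ))
    (n.factorization.mapRange Int.ofNat rfl)
    (Nat.Primes.coe_nat_injective.injOn)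

private lemma Fz_apply (n : ℕ) (p : Nat.Primes) : Fz n p = (n.factorization (p : ℕ) : ℤ) := by
  rfl

private lemma Fz_one : Fz 1 = 0 := by
  ext q; rw [Fz_apply]; simp

private lemma Fz_prime (p : Nat.Primes) : Fz (p : ℕ) = Finsupp.single p 1 := by
  ext q
  rw [Fz_apply, p.2.factorization]
  rcases eq_or_ne p q with h | h
  · subst h; simp
  · have h' : (p : ℕ) ≠ (q : ℕ) := fun hc => h (Subtype.ext hc)
    simp [Finsupp.single_apply, h, h']

private lemma Fz_mul {a b : ℕ} (ha : a ≠ 0) (hb : b ≠ 0) : Fz (a * b) = Fz a + Fz b := by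
  ext q
  rw [Finsupp.add_apply, Fz_apply, Fz_apply, Fz_apply, Nat.factorization_mul ha hb]
  simp

/-- The product `∏_p p^(n_p)` as a function of the finsupp. -/
private def Pz (c : Nat.Primes →₀ ℤ) : ℝ := c.prod fun p n => ((p : ℕ) : ℝ) ^ n

private lemma prime_cast_pos (p : Nat.Primes) : (0 : ℝ) < ((p : ℕ) : ℝ) := by
  exact_mod_cast p.2.pos

private lemma Pz_pos (c : Nat.Primes →₀ ℤ) : 0 < Pz c :=
  Finset.prod_pos fun p _ => zpow_pos (prime_cast_pos p) _

private lemma Pz_zero : Pz 0 = 1 := Finsupp.prod_zero_index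

private lemma Pz_add (a b : Nat.Primes →₀ ℤ) : Pz (a + b) = Pz a * Pz b :=
  Finsupp.prod_add_index' (fun p => zpow_zero _)
    (fun p m n => zpow_add₀ (ne_of_gt (prime_cast_pos p)) m n)

private lemma Pz_neg (a : Nat.Primes →₀ ℤ) : Pz (-a) = (Pz a)⁻¹ := by
  have h := Pz_add a (-a)
  rw [add_neg_cancel, Pz_zero] at h
  exact eq_inv_of_mul_eq_one_right h.symm

private lemma Pz_single (p : Nat.Primes) (n : ℤ) : Pz (Finsupp.single p n) = ((p : ℕ) : ℝ) ^ n :=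
  Finsupp.prod_single_index (zpow_zero _)

private lemma Pz_Fz {n : ℕ} (hn : n ≠ 0) : Pz (Fz n) = (n : ℝ) := by
  induction n using Nat.recOnMul with
  | zero => exact absurd rfl hn
  | one => rw [Fz_one, Pz_zero]; norm_num
  | prime p hp =>
      have h : Fz p = Finsupp.single (⟨p, hp⟩ : Nat.Primes) 1 := Fz_prime ⟨p, hp⟩
      rw [h]; exact (Pz_single _ 1).trans (zpow_one _)
  | mul a b ha hb =>
      have ha0 : a ≠ 0 := fun h => hn (by simp [h])
      have hb0 : b ≠ 0 := fun h => hn (by simp [h])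
      rw [Fz_mul ha0 hb0, Pz_add, ha ha0, hb hb0]
      push_cast; ring

/-- The valuation vector of a rational unit. -/
private def nuQ (f : ℚˣ) : Nat.Primes →₀ ℤ := Fz (f : ℚ).num.natAbs - Fz (f : ℚ).den

private lemma nuQ_apply (f : ℚˣ) (p : Nat.Primes) : nuQ f p = padicValRat (p : ℕ) (f : ℚ) := by
  rw [nuQ, Finsupp.sub_apply, Fz_apply, Fz_apply, padicValRat_def, padicValInt,
    ← Nat.factorization_def _ p.2, ← Nat.factorization_def _ p.2]

private lemma nuQ_mul (f g : ℚˣ) : nuQ (f * g) = nuQ f + nuQ g := by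
  ext p
  haveI : Fact (p : ℕ).Prime := ⟨p.2⟩
  rw [Finsupp.add_apply, nuQ_apply, nuQ_apply, nuQ_apply, Units.val_mul,
    padicValRat.mul f.ne_zero g.ne_zero]

private lemma Pz_nuQ (f : ℚˣ) : Pz (nuQ f) = |((f : ℚ) : ℝ)| := by
  have hq : (f : ℚ) ≠ 0 := f.ne_zero
  have hnum : (f : ℚ).num ≠ 0 := Rat.num_ne_zero.mpr hq
  have hna : (f : ℚ).num.natAbs ≠ 0 := Int.natAbs_ne_zero.mpr hnum
  have hden : (f : ℚ).den ≠ 0 := (f : ℚ).den_nz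
  rw [nuQ, sub_eq_add_neg, Pz_add, Pz_neg, Pz_Fz hna, Pz_Fz hden]
  have hd : (0 : ℝ) < ((f : ℚ).den : ℝ) := by exact_mod_cast (f : ℚ).pos
  rw [Rat.cast_def, abs_div, abs_of_pos hd, div_eq_mul_inv]
  congr 1
  rw [Nat.cast_natAbs (α := ℝ), Int.cast_abs]

private def nuM : ℚˣ →* Multiplicative (Nat.Primes →₀ ℤ) where
  toFun f := Multiplicative.ofAdd (nuQ f)
  map_one' := by
    have h : nuQ 1 = 0 := by
      ext p
      haveI : Fact (p : ℕ).Prime := ⟨p.2⟩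
      rw [nuQ_apply]
      simp [padicValRat.one]
    simp [h]
  map_mul' f g := by
    simp [nuQ_mul, ofAdd_add]

/-- **The exact sequence `1 → {±1} → ℚˣ → (⊕_p ℤ) ⊕ ℝ → ℝ_{>0}ˣ → 1`.**
There is a map `div : ℚˣ → (⊕_p ℤ) ⊕ ℝ`, `f ↦ ((ν_p f)_p, -log |f|)`, and together with the map
`((n_p)_p, t) ↦ e^t · ∏_p p^(n_p)` we get: `div` is a homomorphism with kernel `{±1}`; the second
map is a surjective homomorphism onto the multiplicative group of positive reals; and the kernel
of the second map is the image of `div`. -/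
theorem compactified_spec_Z_divisor_sequence_exact :
    ∃ d : ℚˣ → (Nat.Primes →₀ ℤ) × ℝ,
      (∀ (f : ℚˣ) (p : Nat.Primes), (d f).1 p = padicValRat p (f : ℚ)) ∧
      (∀ f : ℚˣ, (d f).2 = - Real.log |((f : ℚ) : ℝ)|) ∧
      (∀ f g : ℚˣ, d (f * g) = d f + d g) ∧
      (∀ f : ℚˣ, d f = 0 ↔ (f : ℚ) = 1 ∨ (f : ℚ) = -1) ∧
      (∀ x y : (Nat.Primes →₀ ℤ) × ℝ, expProdMap (x + y) = expProdMap x * expProdMap y) ∧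
      (∀ x : (Nat.Primes →₀ ℤ) × ℝ, 0 < expProdMap x) ∧
      (∀ r : ℝ, 0 < r → ∃ x : (Nat.Primes →₀ ℤ) × ℝ, expProdMap x = r) ∧
      (∀ x : (Nat.Primes →₀ ℤ) × ℝ, expProdMap x = 1 ↔ ∃ f : ℚˣ, d f = x) := by
  classical
  have expProdMap_eq : ∀ x : (Nat.Primes →₀ ℤ) × ℝ, expProdMap x = Real.exp x.2 * Pz x.1 :=
    fun x => rfl
  have habs : ∀ f : ℚˣ, (0 : ℝ) < |((f : ℚ) : ℝ)| := fun f =>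
    abs_pos.mpr (by exact_mod_cast f.ne_zero)
  have key : ∀ f : ℚˣ, expProdMap (nuQ f, -Real.log |((f : ℚ) : ℝ)|) = 1 := by
    intro f
    rw [expProdMap_eq]
    show Real.exp (-Real.log |((f : ℚ) : ℝ)|) * Pz (nuQ f) = 1
    rw [Pz_nuQ, Real.exp_neg, Real.exp_log (habs f), inv_mul_cancel₀ (habs f).ne']
  refine ⟨fun f => (nuQ f, - Real.log |((f : ℚ) : ℝ)|), fun f p => nuQ_apply f p,
    fun f => rfl, ?_, ?_, ?_, ?_, ?_, ?_⟩
  · -- additivity of d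
    intro f g
    refine Prod.ext (nuQ_mul f g) ?_
    show -Real.log |((↑(f * g) : ℚ) : ℝ)| = -Real.log _ + -Real.log _
    rw [Units.val_mul, Rat.cast_mul, abs_mul, Real.log_mul (habs f).ne' (habs g).ne']
    ring
  · -- kernel of d is {±1}
    intro f
    constructor
    · intro h
      have h2 : -Real.log |((f : ℚ) : ℝ)| = 0 := congrArg Prod.snd h
      have h3 : |((f : ℚ) : ℝ)| = 1 := by
        rcases Real.log_eq_zero.mp (neg_eq_zero.mp h2) with h' | h' | h'
        · exact absurd h' (habs f).ne'
        · exact h'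
        · nlinarith [habs f]
      have h4 : |(f : ℚ)| = 1 := by
        apply Rat.cast_injective (α := ℝ)
        rw [Rat.cast_abs]
        simpa using h3
      rcases (abs_eq (by norm_num : (0 : ℚ) ≤ 1)).mp h4 with h' | h'
      · exact Or.inl h'
      · exact Or.inr h'
    · rintro (h | h) <;>
        simp [Prod.ext_iff, nuQ, h, sub_self, Real.log_one]
  · -- expProdMap is a homomorphism
    intro x y
    rw [expProdMap_eq, expProdMap_eq, expProdMap_eq]
    show Real.exp (x.2 + y.2) * Pz (x.1 + y.1) = _
    rw [Real.exp_add, Pz_add]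
    ring
  · -- positivity
    intro x
    rw [expProdMap_eq]
    exact mul_pos (Real.exp_pos _) (Pz_pos _)
  · -- surjectivity
    intro r hr
    refine ⟨(0, Real.log r), ?_⟩
    rw [expProdMap_eq]
    show Real.exp (Real.log r) * Pz 0 = r
    rw [Pz_zero, Real.exp_log hr, mul_one]
  · -- exactness in the middle
    intro x
    constructor
    · intro h1
      obtain ⟨c, t⟩ := x
      have hne : ∀ p : Nat.Primes, ((p : ℕ) : ℚ) ≠ 0 := fun p =>
        Nat.cast_ne_zero.mpr p.2.ne_zero
      set u : ℚˣ := ∏ p ∈ c.support, (Units.mk0 ((p : ℕ) : ℚ) (hne p)) ^ (c p) with hu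
      have hup : ∀ p : Nat.Primes, nuQ (Units.mk0 ((p : ℕ) : ℚ) (hne p)) = Finsupp.single p 1 := by
        intro p
        rw [nuQ, show ((Units.mk0 ((p : ℕ) : ℚ) (hne p) : ℚˣ) : ℚ) = ((p : ℕ) : ℚ) from rfl,
          Rat.num_natCast, Rat.den_natCast, Int.natAbs_natCast, Fz_prime, Fz_one, sub_zero]
      have hnu : nuQ u = c := by
        have h5 : Multiplicative.toAdd (nuM u) = c := by
          rw [hu, map_prod, toAdd_prod]
          have hterm : ∀ p ∈ c.support,
              Multiplicative.toAdd (nuM (Units.mk0 ((p : ℕ) : ℚ) (hne p) ^ (c p)))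
                = Finsupp.single p (c p) := by
            intro p _
            rw [map_zpow]
            show Multiplicative.toAdd ((Multiplicative.ofAdd (nuQ _)) ^ (c p)) = _
            rw [toAdd_zpow, toAdd_ofAdd, hup p, Finsupp.smul_single, smul_eq_mul, mul_one]
          rw [Finset.sum_congr rfl hterm]
          exact Finsupp.sum_single c
        exact h5
      refine ⟨u, Prod.ext hnu ?_⟩
      have h7 : Real.exp t * Pz c = 1 := h1
      have h8 : Real.exp (-Real.log |((u : ℚ) : ℝ)|) * Pz c = 1 := by
        have := key u
        rw [expProdMap_eq] at this
        show Real.exp (-Real.log |((u : ℚ) : ℝ)|) * Pz c = 1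
        rw [← hnu]
        exact this
      have hPz := (Pz_pos c).ne'
      have h9 : Real.exp (-Real.log |((u : ℚ) : ℝ)|) = Real.exp t :=
        mul_right_cancel₀ hPz (h8.trans h7.symm)
      show -Real.log |((u : ℚ) : ℝ)| = t
      exact Real.exp_eq_exp.mp h9
    · rintro ⟨f, rfl⟩
      exact key f

end
end
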